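/- arXiv:2204.07008 — 2 statements merged into one kernel-verified Lean document; each statement's English description precedes it below -/
import Mathlib

section
/- Let f : H → ℝ be a convex lower semicontinuous function on a Hilbert space H, and let (u_m) be a sequence converging weakly to u* with f(u_m) → f(u*). If f(v) = g(v) + (α/2)‖v − c‖² with g convex and lower semicontinuous and α > 0, then u_m → u* strongly in H. -/
open Filter

lemma weak_seq_lsc {H : Type*} [NormedAddCommGroup H] [InnerProductSpace ℝ H] [CompleteSpace H]
    (h : H → ℝ) (hconv : ConvexOn ℝ Set.univ h) (hlsc : LowerSemicontinuous h)
    (v : ℕ → H) (vstar : H)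
    (hw : ∀ w : H, Tendsto (fun m => (inner ℝ w (v m) : ℝ)) atTop (nhds (inner ℝ w vstar)))
    (r : ℝ) (hr : r < h vstar) : ∀ᶠ m in atTop, r < h (v m) := by
  by_contra hc
  rw [Filter.not_eventually] at hc
  have hc' : ∃ᶠ m in atTop, h (v m) ≤ r := hc.mono fun m hm => not_lt.1 hm
  set C : Set H := {x | h x ≤ r} with hC
  have hCconv : Convex ℝ C := by
    have := hconv.convex_le r
    convert this using 1
    ext x; simp [hC]
  have hCclosed : IsClosed C := by
    have := lowerSemicontinuous_iff_isClosed_preimage.1 hlsc r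
    convert this using 1
    ext x; simp [hC]
  have hvC : vstar ∉ C := by simp [hC]; linarith
  obtain ⟨φ, s, hφC, hφv⟩ := geometric_hahn_banach_closed_point hCconv hCclosed hvC
  set w : H := (InnerProductSpace.toDual ℝ H).symm φ with hwdef
  have hrepr : ∀ x : H, (inner ℝ w x : ℝ) = φ x := fun x =>
    InnerProductSpace.toDual_symm_apply
  have hT : Tendsto (fun m => φ (v m)) atTop (nhds (φ vstar)) := by
    have := hw w
    simpa only [hrepr] using this
  have hev : ∀ᶠ m in atTop, s < φ (v m) := hT.eventually (lt_mem_nhds hφv)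
  obtain ⟨m, hm1, hm2⟩ := (hc'.and_eventually hev).exists
  have : φ (v m) < s := hφC (v m) hm1
  linarith

/-- If `f(v) = g(v) + (α/2)‖v-c‖²` with `g` convex lower semicontinuous and `α > 0` on a
Hilbert space, and `u_m ⇀ u*` weakly with `f(u_m) → f(u*)`, then `u_m → u*` strongly. -/
theorem stmt4 {H : Type*} [NormedAddCommGroup H] [InnerProductSpace ℝ H] [CompleteSpace H]
    (g : H → ℝ) (hgconv : ConvexOn ℝ Set.univ g) (hglsc : LowerSemicontinuous g)
    (α : ℝ) (hα : 0 < α) (c : H) (f : H → ℝ)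
    (hf : ∀ v, f v = g v + α / 2 * ‖v - c‖ ^ 2)
    (hfconvex : ConvexOn ℝ Set.univ f) (hflsc : LowerSemicontinuous f)
    (u : ℕ → H) (ustar : H)
    (hweak : ∀ w : H, Tendsto (fun m => (inner ℝ w (u m) : ℝ)) atTop (nhds (inner ℝ w ustar)))
    (hfval : Tendsto (fun m => f (u m)) atTop (nhds (f ustar))) :
    Tendsto u atTop (nhds ustar) := by
  set v : ℕ → H := fun m => (1/2 : ℝ) • u m + (1/2 : ℝ) • ustar with hv
  -- weak convergence of v to ustar
  have hvweak : ∀ w : H, Tendsto (fun m => (inner ℝ w (v m) : ℝ)) atTop (nhds (inner ℝ w ustar)) := by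
    intro w
    have h1 : (fun m => (inner ℝ w (v m) : ℝ))
        = fun m => (1/2 : ℝ) * (inner ℝ w (u m) : ℝ) + (1/2 : ℝ) * (inner ℝ w ustar : ℝ) := by
      funext m
      simp [hv, inner_add_right, inner_smul_right]
    rw [h1]
    have := (((hweak w).const_mul (1/2 : ℝ)).add_const ((1/2 : ℝ) * (inner ℝ w ustar : ℝ)))
    convert this using 2
    ring
  -- strong convexity inequality
  have key : ∀ m, f (v m) + α/8 * ‖u m - ustar‖^2 ≤ (f (u m) + f ustar)/2 := by
    intro m
    have hg : g (v m) ≤ (1/2 : ℝ) * g (u m) + (1/2 : ℝ) * g ustar :=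
      hgconv.2 (Set.mem_univ _) (Set.mem_univ _) (by norm_num) (by norm_num) (by norm_num)
    have hnorm : ‖v m - c‖^2
        = (‖u m - c‖^2 + ‖ustar - c‖^2)/2 - ‖u m - ustar‖^2/4 := by
      have hvc : v m - c = (1/2 : ℝ) • ((u m - c) + (ustar - c)) := by
        simp only [hv]
        module
      set a := u m - c
      set b := ustar - c
      have hab : u m - ustar = a - b := by simp only [a, b]; abel
      rw [hvc, hab, norm_smul]
      have h1 : ‖a + b‖^2 = ‖a‖^2 + 2 * (inner ℝ a b : ℝ) + ‖b‖^2 := norm_add_sq_real a b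
      have h2 : ‖a - b‖^2 = ‖a‖^2 - 2 * (inner ℝ a b : ℝ) + ‖b‖^2 := norm_sub_sq_real a b
      rw [mul_pow, h2]
      simp only [norm_div, Real.norm_eq_abs]
      rw [h1]
      simp only [abs_one, abs_two]
      ring
    rw [hf, hf, hf, hnorm]
    nlinarith [hg, sq_nonneg ‖u m - ustar‖]
  -- conclude
  rw [tendsto_iff_norm_sub_tendsto_zero]
  rw [NormedAddCommGroup.tendsto_nhds_zero]
  intro ε hε
  have hδ : (0:ℝ) < α/16 * ε^2 := by positivity
  have h1 : ∀ᶠ m in atTop, f ustar - α/16 * ε^2 < f (v m) :=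
    weak_seq_lsc f hfconvex hflsc v ustar hvweak _ (by linarith)
  have h2 : ∀ᶠ m in atTop, f (u m) < f ustar + α/16 * ε^2 :=
    hfval.eventually (eventually_lt_nhds (by linarith))
  filter_upwards [h1, h2] with m hm1 hm2
  have hk := key m
  have hsq : ‖u m - ustar‖^2 < ε^2 := by nlinarith
  rw [Real.norm_eq_abs, abs_of_nonneg (norm_nonneg _)]
  exact lt_of_pow_lt_pow_left₀ 2 hε.le hsq
end

section
/- Let partitions of (0,T) be nested: every interval I_rᵏ of the level-k partition is contained in some interval I_iℓ of the level-ℓ partition (k ≥ ℓ). Given ā ∈ [−1,1]^{nN_ℓ}, define ã_k ∈ ℝ^{nN_k} by (ã_k)_{(j−1)N_k+r} = ā_{(j−1)N_ℓ+i} · λ(I_rᵏ)/λ(I_iℓ) where I_rᵏ ⊆ I_iℓ. Then āᵀ Π_ℓ(u) = ã_kᵀ Π_k(u) for every u ∈ L¹(0,T;ℝⁿ), and (τ_ℓ/h_k)|（ã_k)_s| ≤ 1 for every component s, where τ_ℓ is the minimal length of level-ℓ intervals and h_k the maximal length of level-k intervals. -/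
open MeasureTheory Set

/-- Lifting of cut coefficients through nested partitions: with
`(ã_k)_{(j,r)} = ā_{(j,σ(r))} λ(J_r)/λ(I_{σ(r)})` one has `āᵀΠ_ℓ(u) = ã_kᵀΠ_k(u)` for every
`u ∈ L¹(0,T;ℝⁿ)`, and `(τ_ℓ/h_k)|(ã_k)_s| ≤ 1` for every component `s`. -/
theorem stmt9 (T : ℝ) (hT : 0 < T) (n N Nk : ℕ)
    (I : Fin N → Set ℝ) (J : Fin Nk → Set ℝ)
    (hI : ∀ i, ∃ a b : ℝ, a < b ∧ I i = Set.Ioo a b)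
    (hJ : ∀ r, ∃ a b : ℝ, a < b ∧ J r = Set.Ioo a b)
    (hIdisj : Pairwise (Function.onFun Disjoint I))
    (hJdisj : Pairwise (Function.onFun Disjoint J))
    (hsub : ∀ i, I i ⊆ Set.Ioo 0 T)
    (σmap : Fin Nk → Fin N) (hnest : ∀ r, J r ⊆ I (σmap r))
    (hcover : ∀ i, volume ((I i) \ ⋃ r ∈ {r | σmap r = i}, J r) = 0)
    (τℓ hk : ℝ) (hτpos : 0 < τℓ)
    (hτ : ∀ i, τℓ ≤ (volume (I i)).toReal)
    (hhk : ∀ r, (volume (J r)).toReal ≤ hk)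
    (abar : Fin n → Fin N → ℝ) (habar : ∀ j i, |abar j i| ≤ 1)
    (atilde : Fin n → Fin Nk → ℝ)
    (hatilde : ∀ j r, atilde j r
      = abar j (σmap r) * (volume (J r)).toReal / (volume (I (σmap r))).toReal) :
    (∀ u : ℝ → Fin n → ℝ, Integrable u (volume.restrict (Set.Ioo 0 T)) →
      ∑ j, ∑ i, abar j i * ((volume (I i)).toReal⁻¹ * ∫ t in I i, u t j)
        = ∑ j, ∑ r, atilde j r * ((volume (J r)).toReal⁻¹ * ∫ t in J r, u t j)) ∧
    (∀ j r, τℓ / hk * |atilde j r| ≤ 1) := by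
  have hIvol : ∀ i, 0 < (volume (I i)).toReal := by
    intro i; obtain ⟨a, b, hab, hIeq⟩ := hI i
    rw [hIeq, Real.volume_Ioo, ENNReal.toReal_ofReal (by linarith)]; linarith
  have hJvol : ∀ r, 0 < (volume (J r)).toReal := by
    intro r; obtain ⟨a, b, hab, hJeq⟩ := hJ r
    rw [hJeq, Real.volume_Ioo, ENNReal.toReal_ofReal (by linarith)]; linarith
  have hJmeas : ∀ r, MeasurableSet (J r) := by
    intro r; obtain ⟨a, b, _, hJeq⟩ := hJ r; rw [hJeq]; exact measurableSet_Ioo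
  constructor
  · intro u hu
    refine Finset.sum_congr rfl fun j _ => ?_
    set f : ℝ → ℝ := fun t => u t j with hf
    have hfint : IntegrableOn f (Set.Ioo 0 T) volume := by
      exact (ContinuousLinearMap.proj (R := ℝ) (φ := fun _ : Fin n => ℝ) j).integrable_comp hu
    have hfI : ∀ i, IntegrableOn f (I i) volume := fun i => hfint.mono_set (hsub i)
    have key : ∀ i, ∫ t in I i, f t
        = ∑ r ∈ Finset.univ.filter (fun r => σmap r = i), ∫ t in J r, f t := by
      intro i
      have hUsub : (⋃ r ∈ Finset.univ.filter (fun r => σmap r = i), J r) ⊆ I i := by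
        simp only [Set.iUnion_subset_iff]
        intro r hr
        have hri : σmap r = i := by simpa using hr
        exact hri ▸ hnest r
      have hnull : volume (I i \ ⋃ r ∈ Finset.univ.filter (fun r => σmap r = i), J r) = 0 := by
        have hset : (⋃ r ∈ Finset.univ.filter (fun r => σmap r = i), J r)
            = ⋃ r ∈ {r | σmap r = i}, J r := by
          ext x; simp
        rw [hset]; exact hcover i
      have hae : I i =ᵐ[volume] (⋃ r ∈ Finset.univ.filter (fun r => σmap r = i), J r) := by
        rw [MeasureTheory.ae_eq_set]
        refine ⟨hnull, ?_⟩
        rw [Set.diff_eq_empty.2 hUsub]; simp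
      rw [setIntegral_congr_set hae]
      exact integral_biUnion_finset _ (fun r _ => hJmeas r)
        (fun a _ b _ hab => hJdisj hab)
        (fun r hr => (hfI (σmap r)).mono_set (hnest r))
    rw [← Finset.sum_fiberwise Finset.univ σmap
      (fun r => atilde j r * ((volume (J r)).toReal⁻¹ * ∫ t in J r, f t))]
    refine Finset.sum_congr rfl fun i _ => ?_
    rw [key i, Finset.mul_sum, Finset.mul_sum]
    refine Finset.sum_congr rfl fun r hr => ?_
    have hri : σmap r = i := by simpa using hr
    rw [hatilde, hri]
    have h1 := (hJvol r).ne'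
    have h2 := (hIvol i).ne'
    field_simp
  · intro j r
    have hJ0 := hJvol r
    have hI0 := hIvol (σmap r)
    have hk0 : 0 < hk := lt_of_lt_of_le hJ0 (hhk r)
    have h1 : |atilde j r| ≤ (volume (J r)).toReal / (volume (I (σmap r))).toReal := by
      rw [hatilde]
      rw [abs_div, abs_mul, abs_of_pos hJ0, abs_of_pos hI0]
      gcongr
      exact mul_le_of_le_one_left hJ0.le (habar j (σmap r))
    have h2 : τℓ / hk * |atilde j r|
        ≤ τℓ / hk * ((volume (J r)).toReal / (volume (I (σmap r))).toReal) :=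
      mul_le_mul_of_nonneg_left h1 (by positivity)
    refine h2.trans ?_
    rw [div_mul_div_comm, div_le_one (by positivity)]
    nlinarith [hτ (σmap r), hhk r]
end
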